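/- Strict hypervolume improvement at non-dominated points: let B ⊆ {y ∈ ℝ^m : r ≤ y} be a finite set and let y ∈ ℝ^m satisfy r_i < y_i for every coordinate i. If y ∉ A[B], then the Lebesgue measure of A[B ∪ {y}] is strictly greater than the Lebesgue measure of A[B]. -/

import Mathlib

open MeasureTheory

/-- The attained set `A[B]` relative to a reference point `r`:
the points of the cone `[r, ∞)` dominated by some element of `B`
(componentwise order on `ℝ^m`). -/
def attained {m : ℕ} (r : Fin m → ℝ) (B : Set (Fin m → ℝ)) : Set (Fin m → ℝ) :=
  {y | r ≤ y ∧ ∃ y' ∈ B, y ≤ y'}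

lemma attained_eq_biUnion {m : ℕ} (r : Fin m → ℝ) (B : Set (Fin m → ℝ)) :
    attained r B = ⋃ b ∈ B, Set.Icc r b := by
  ext z
  simp only [attained, Set.mem_setOf_eq, Set.mem_iUnion, Set.mem_Icc, exists_prop]
  aesop

/-- Strict hypervolume improvement at non-dominated points: if `B` is a finite
subset of the cone `[r, ∞)`, `y` satisfies `r i < y i` in every coordinate and
`y ∉ A[B]`, then the Lebesgue measure of `A[B ∪ {y}]` is strictly greater than
that of `A[B]`. -/
theorem hypervolume_strict_improvement {m : ℕ} (hm : 1 ≤ m) (r : Fin m → ℝ)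
    (B : Set (Fin m → ℝ)) (hBfin : B.Finite)
    (hB : B ⊆ {y : Fin m → ℝ | r ≤ y})
    (y : Fin m → ℝ) (hy : ∀ i, r i < y i) (hnd : y ∉ attained r B) :
    volume (attained r B) < volume (attained r (B ∪ {y})) := by
  classical
  set A := attained r B with hA
  have hAeq : A = ⋃ b ∈ B, Set.Icc r b := attained_eq_biUnion r B
  have hAclosed : IsClosed A := by
    rw [hAeq]
    exact hBfin.isClosed_biUnion fun b _ => isClosed_Icc
  have hAfin : volume A < ⊤ := by
    rw [hAeq]
    exact measure_biUnion_lt_top hBfin fun b _ => isCompact_Icc.measure_lt_top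
  obtain ⟨ε, hε, hball⟩ : ∃ ε > 0, Metric.ball y ε ⊆ Aᶜ := by
    rcases Metric.isOpen_iff.mp hAclosed.isOpen_compl y hnd with ⟨ε, hε, h⟩
    exact ⟨ε, hε, h⟩
  set a : Fin m → ℝ := fun i => max (r i) (y i - ε / 2) with ha
  have hbox_sub_ball : Set.Icc a y ⊆ Metric.ball y ε := by
    intro z hz
    rw [Metric.mem_ball]
    have hle : dist z y ≤ ε / 2 := by
      rw [dist_pi_le_iff (by positivity)]
      intro i
      rw [Real.dist_eq, abs_le]
      have h1 := hz.1 i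
      have h2 := hz.2 i
      have h3 : y i - ε / 2 ≤ a i := le_max_right _ _
      constructor <;> simp only [ha] at h1 <;> [linarith [le_trans h3 h1]; linarith]
    linarith
  have hdisj : Disjoint A (Set.Icc a y) :=
    Set.disjoint_left.mpr fun z hzA hzb => hball (hbox_sub_ball hzb) hzA
  have hsub : A ∪ Set.Icc a y ⊆ attained r (B ∪ {y}) := by
    intro z hz
    rcases hz with hz | hz
    · obtain ⟨h1, b, hb, h2⟩ := hz
      exact ⟨h1, b, Or.inl hb, h2⟩
    · exact ⟨fun i => le_trans (le_max_left _ _) (hz.1 i), y, Or.inr rfl, hz.2⟩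
  have hvbox : 0 < volume (Set.Icc a y) := by
    rw [Real.volume_Icc_pi]
    rw [CanonicallyOrderedAdd.prod_pos]
    intro i _
    apply ENNReal.ofReal_pos.mpr
    have : a i < y i := max_lt (hy i) (by linarith [hε])
    linarith
  calc volume A < volume A + volume (Set.Icc a y) :=
        ENNReal.lt_add_right hAfin.ne hvbox.ne'
    _ = volume (A ∪ Set.Icc a y) := (measure_union hdisj measurableSet_Icc).symm
    _ ≤ volume (attained r (B ∪ {y})) := measure_mono hsub
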